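/- Let ν_1 ≤ ν_2 ≤ … be a nondecreasing sequence in (0,1], let j ≤ u ≤ n with Σ_{l=1}^u ν_l > j, and let p be any rearrangement of (ν_1,…,ν_n) (extended by ν's beyond n). Then Σ_{i=j}^n i f_GP(i; j, p) ≤ (j/ν_1)(ν_u/ν_1)^j + n exp( − (Σ_{l=1}^u ν_l − j)² / (2u) ). -/

import Mathlib

/-- The generalized Pascal pmf: the probability that the `j`-th success among independent
Bernoulli trials `1, 2, …` with success probabilities `p` occurs exactly at trial `i`. -/
def fGP (p : ℕ → ℝ) (j i : ℕ) : ℝ :=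
  ∑ ω ∈ ((Finset.Icc 1 i).powersetCard j).filter (fun ω => i ∈ ω),
    ∏ l ∈ Finset.Icc 1 i, (if l ∈ ω then p l else 1 - p l)

namespace FGPaux

/-- `V L k` = probability of exactly `k` successes among Bernoulli trials with
success probabilities listed in `L`. -/
def V : List ℝ → ℕ → ℝ
  | [], 0 => 1
  | [], _ + 1 => 0
  | a :: L, 0 => (1 - a) * V L 0
  | a :: L, k + 1 => (1 - a) * V L (k + 1) + a * V L k

/-- `Dl L j` = probability of at most `j-1` successes. -/
def Dl (L : List ℝ) (j : ℕ) : ℝ := ∑ k ∈ Finset.range j, V L k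

/-- list `[q m, q (m-1), …, q 1]`. -/
def Lst (q : ℕ → ℝ) : ℕ → List ℝ
  | 0 => []
  | m + 1 => q (m + 1) :: Lst q m

def Mem01 (L : List ℝ) : Prop := ∀ a ∈ L, 0 ≤ a ∧ a ≤ 1

lemma V_nonneg {L : List ℝ} (h : Mem01 L) : ∀ k, 0 ≤ V L k := by
  induction L with
  | nil => intro k; cases k <;> simp [V]
  | cons a L ih =>
    have ha := h a (by simp)
    have hL : Mem01 L := fun b hb => h b (List.mem_cons_of_mem _ hb)
    intro k
    cases k with
    | zero => exact mul_nonneg (by linarith [ha.2]) (ih hL 0)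
    | succ k =>
      exact add_nonneg (mul_nonneg (by linarith [ha.2]) (ih hL (k+1)))
        (mul_nonneg ha.1 (ih hL k))

lemma V_eq_zero {L : List ℝ} : ∀ {k}, L.length < k → V L k = 0 := by
  induction L with
  | nil =>
    intro k hk
    cases k with
    | zero => simp at hk
    | succ k => simp [V]
  | cons a L ih =>
    intro k hk
    cases k with
    | zero => simp at hk
    | succ k =>
      have hk' : L.length + 1 < k + 1 := by simpa using hk
      have h1 : L.length < k + 1 := by omega
      have h2 : L.length < k := by omega
      simp [V, ih h1, ih h2]

lemma Dl_zero (L : List ℝ) : Dl L 0 = 0 := by simp [Dl]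

lemma Dl_cons (a : ℝ) (L : List ℝ) (j : ℕ) :
    Dl (a :: L) (j + 1) = (1 - a) * Dl L (j + 1) + a * Dl L j := by
  induction j with
  | zero => simp [Dl, V]
  | succ j ih =>
    rw [Dl, Finset.sum_range_succ, ← Dl, ih]
    show _ + V (a :: L) (j + 1) = _
    rw [V]
    simp only [Dl, Finset.sum_range_succ]
    ring

lemma Dl_nonneg {L : List ℝ} (h : Mem01 L) (j : ℕ) : 0 ≤ Dl L j :=
  Finset.sum_nonneg fun k _ => V_nonneg h k

lemma Dl_mono_j {L : List ℝ} (h : Mem01 L) {j j' : ℕ} (hj : j ≤ j') : Dl L j ≤ Dl L j' :=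
  Finset.sum_le_sum_of_subset_of_nonneg (Finset.range_subset_range.2 hj)
    (fun k _ _ => V_nonneg h k)

lemma Dl_eq_one {L : List ℝ} : ∀ {j}, L.length < j → Dl L j = 1 := by
  induction L with
  | nil =>
    intro j hj
    obtain ⟨j, rfl⟩ : ∃ j', j = j' + 1 := ⟨j - 1, by omega⟩
    have : ∀ k ∈ Finset.range (j+1), V ([] : List ℝ) k = if k = 0 then 1 else 0 := by
      intro k _; cases k <;> simp [V]
    rw [Dl, Finset.sum_congr rfl this, Finset.sum_ite_eq' (Finset.range (j+1)) 0 (fun _ => (1:ℝ))]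
    simp
  | cons a L ih =>
    intro j hj
    obtain ⟨j, rfl⟩ : ∃ j', j = j' + 1 := ⟨j - 1, by omega⟩
    have h1 : L.length < j + 1 := by simp at hj; omega
    have h2 : L.length < j := by simp at hj; omega
    rw [Dl_cons, ih h1, ih h2]; ring

lemma Dl_cons_le {a : ℝ} (ha : 0 ≤ a) (ha1 : a ≤ 1) {L : List ℝ} (h : Mem01 L) (j : ℕ) :
    Dl (a :: L) j ≤ Dl L j := by
  cases j with
  | zero => simp [Dl_zero]
  | succ j =>
    rw [Dl_cons]
    nlinarith [Dl_mono_j h (Nat.le_succ j), Dl_nonneg h j, Dl_nonneg h (j+1)]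

lemma V_perm {L L' : List ℝ} (h : L.Perm L') : ∀ k, V L k = V L' k := by
  induction h with
  | nil => intro k; rfl
  | cons a h ih =>
    intro k
    cases k with
    | zero => simp [V, ih 0]
    | succ k => simp [V, ih k, ih (k+1)]
  | swap a b L =>
    intro k
    match k with
    | 0 => simp [V]; ring
    | 1 => simp [V]; ring
    | k + 2 => simp [V]; ring
  | trans h1 h2 ih1 ih2 => intro k; rw [ih1 k, ih2 k]

lemma Dl_perm {L L' : List ℝ} (h : L.Perm L') (j : ℕ) : Dl L j = Dl L' j :=
  Finset.sum_congr rfl fun k _ => V_perm h k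
lemma Mem01_of_forall₂ {L L' : List ℝ}
    (h : List.Forall₂ (fun a b => 0 ≤ b ∧ b ≤ a ∧ a ≤ 1) L L') : Mem01 L' := by
  induction h with
  | nil => intro x hx; simp at hx
  | @cons a b M M' hab h ih =>
    intro x hx
    rcases List.mem_cons.1 hx with rfl | hx'
    · exact ⟨hab.1, le_trans hab.2.1 hab.2.2⟩
    · exact ih x hx'

/-- pointwise domination: larger success probabilities give smaller `Dl`. -/
lemma Dl_le_of_forall₂ {L L' : List ℝ}
    (h : List.Forall₂ (fun a b => 0 ≤ b ∧ b ≤ a ∧ a ≤ 1) L L') :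
    ∀ j, Dl L j ≤ Dl L' j := by
  induction h with
  | nil => intro j; exact le_refl _
  | @cons a b L L' hab h ih =>
    have hL' : Mem01 L' := Mem01_of_forall₂ h
    intro j
    cases j with
    | zero => simp [Dl_zero]
    | succ j =>
      rw [Dl_cons, Dl_cons]
      have h1 : Dl L (j+1) ≤ Dl L' (j+1) := ih (j+1)
      have h2 : Dl L j ≤ Dl L' j := ih j
      have h3 : Dl L' j ≤ Dl L' (j+1) := Dl_mono_j hL' (Nat.le_succ j)
      have hb0 := hab.1
      have hba := hab.2.1
      have ha1 := hab.2.2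
      nlinarith [Dl_nonneg hL' j, Dl_nonneg hL' (j+1)]
lemma Icc_succ (m : ℕ) : Finset.Icc 1 (m+1) = insert (m+1) (Finset.Icc 1 m) := by
  ext x; simp [Finset.mem_Icc, Finset.mem_insert]; omega

lemma V_eq (q : ℕ → ℝ) : ∀ m k, V (Lst q m) k =
    ∑ ω ∈ (Finset.Icc 1 m).powersetCard k,
      ∏ l ∈ Finset.Icc 1 m, (if l ∈ ω then q l else 1 - q l) := by
  intro m
  induction m with
  | zero =>
    intro k
    cases k with
    | zero => simp [Lst, V]
    | succ k => simp [Lst, V]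
  | succ m ih =>
    have hnot : (m+1) ∉ Finset.Icc 1 m := by simp
    intro k
    cases k with
    | zero =>
      rw [Icc_succ]
      simp only [Finset.powersetCard_zero, Finset.sum_singleton]
      rw [Finset.prod_insert hnot]
      show V (q (m+1) :: Lst q m) 0 = _
      rw [V, ih 0]
      simp
    | succ k =>
      rw [Icc_succ, Finset.powersetCard_succ_insert hnot]
      have hdisj : Disjoint ((Finset.Icc 1 m).powersetCard (k+1))
          (((Finset.Icc 1 m).powersetCard k).image (insert (m+1))) := by
        rw [Finset.disjoint_left]
        intro ω hω hω'
        obtain ⟨hsub, -⟩ := Finset.mem_powersetCard.1 hω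
        obtain ⟨τ, hτ, rfl⟩ := Finset.mem_image.1 hω'
        exact hnot (hsub (Finset.mem_insert_self _ _))
      rw [Finset.sum_union hdisj]
      show _ = _ + _
      have e1 : ∑ ω ∈ (Finset.Icc 1 m).powersetCard (k+1),
          ∏ l ∈ insert (m+1) (Finset.Icc 1 m), (if l ∈ ω then q l else 1 - q l)
          = (1 - q (m+1)) * V (Lst q m) (k+1) := by
        rw [ih (k+1), Finset.mul_sum]
        refine Finset.sum_congr rfl fun ω hω => ?_
        obtain ⟨hsub, -⟩ := Finset.mem_powersetCard.1 hω
        rw [Finset.prod_insert hnot]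
        have : (m+1) ∉ ω := fun h => hnot (hsub h)
        rw [if_neg this]
      have e2 : ∑ ω ∈ ((Finset.Icc 1 m).powersetCard k).image (insert (m+1)),
          ∏ l ∈ insert (m+1) (Finset.Icc 1 m), (if l ∈ ω then q l else 1 - q l)
          = q (m+1) * V (Lst q m) k := by
        rw [Finset.sum_image, ih k, Finset.mul_sum]
        · refine Finset.sum_congr rfl fun τ hτ => ?_
          obtain ⟨hsub, -⟩ := Finset.mem_powersetCard.1 hτ
          rw [Finset.prod_insert hnot, if_pos (Finset.mem_insert_self _ _)]
          congr 1
          refine Finset.prod_congr rfl fun l hl => ?_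
          have hlne : l ≠ m+1 := by
            intro h; exact hnot (h ▸ hl)
          simp [Finset.mem_insert, hlne]
        · intro τ hτ τ' hτ' heq
          obtain ⟨hsub, -⟩ := Finset.mem_powersetCard.1 hτ
          obtain ⟨hsub', -⟩ := Finset.mem_powersetCard.1 hτ'
          have h1 : (m+1) ∉ τ := fun h => hnot (hsub h)
          have h2 : (m+1) ∉ τ' := fun h => hnot (hsub' h)
          have := congrArg (fun s => Finset.erase s (m+1)) heq
          simpa [Finset.erase_insert h1, Finset.erase_insert h2] using this
      rw [e1, e2]
      rfl

lemma fGP_eq (p : ℕ → ℝ) (j i : ℕ) :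
    fGP p (j+1) (i+1) = p (i+1) * V (Lst p i) (j+1-1) := by
  simp only [Nat.add_sub_cancel]
  rw [fGP, V_eq, Finset.mul_sum]
  refine Finset.sum_bij' (fun ω _ => ω.erase (i+1)) (fun τ _ => insert (i+1) τ) ?_ ?_ ?_ ?_ ?_
  · intro ω hω
    rw [Finset.mem_filter, Finset.mem_powersetCard] at hω
    obtain ⟨⟨hsub, hcard⟩, hmem⟩ := hω
    rw [Finset.mem_powersetCard]
    constructor
    · intro x hx
      obtain ⟨hxne, hxω⟩ := Finset.mem_erase.1 hx
      have := hsub hxω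
      rw [Finset.mem_Icc] at this ⊢
      omega
    · rw [Finset.card_erase_of_mem hmem, hcard]
      omega
  · intro τ hτ
    rw [Finset.mem_powersetCard] at hτ
    obtain ⟨hsub, hcard⟩ := hτ
    have hni : (i+1) ∉ τ := by
      intro h; have := hsub h; rw [Finset.mem_Icc] at this; omega
    rw [Finset.mem_filter, Finset.mem_powersetCard]
    refine ⟨⟨?_, ?_⟩, Finset.mem_insert_self _ _⟩
    · intro x hx
      rcases Finset.mem_insert.1 hx with rfl | hx'
      · simp
      · have := hsub hx'; rw [Finset.mem_Icc] at this ⊢; omega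
    · rw [Finset.card_insert_of_notMem hni, hcard]
  · intro ω hω
    rw [Finset.mem_filter] at hω
    exact Finset.insert_erase hω.2
  · intro τ hτ
    rw [Finset.mem_powersetCard] at hτ
    have hni : (i+1) ∉ τ := by
      intro h; have := hτ.1 h; rw [Finset.mem_Icc] at this; omega
    exact Finset.erase_insert hni
  · intro ω hω
    rw [Finset.mem_filter, Finset.mem_powersetCard] at hω
    obtain ⟨⟨hsub, hcard⟩, hmem⟩ := hω
    rw [Icc_succ, Finset.prod_insert (by simp), if_pos hmem]
    congr 1
    refine Finset.prod_congr rfl fun l hl => ?_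
    have hlne : l ≠ i+1 := by
      rw [Finset.mem_Icc] at hl; omega
    simp [Finset.mem_erase, hlne]
@[simp] lemma Lst_length (q : ℕ → ℝ) : ∀ m, (Lst q m).length = m
  | 0 => rfl
  | m + 1 => by simp [Lst, Lst_length q m]

lemma V_eq_Dl_sub (L : List ℝ) (j : ℕ) : V L j = Dl L (j+1) - Dl L j := by
  simp [Dl, Finset.sum_range_succ]

lemma fGP_diff (p : ℕ → ℝ) (j m : ℕ) :
    fGP p (j+1) (m+1) = Dl (Lst p m) (j+1) - Dl (Lst p (m+1)) (j+1) := by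
  rw [fGP_eq]
  show p (m+1) * V (Lst p m) j = _
  have : Lst p (m+1) = p (m+1) :: Lst p m := rfl
  rw [this, Dl_cons, V_eq_Dl_sub]
  ring

lemma sum_ident (p : ℕ → ℝ) (j : ℕ) : ∀ N,
    ∑ i ∈ Finset.Icc (j+1) N, (i : ℝ) * fGP p (j+1) i
      = ∑ m ∈ Finset.range N, Dl (Lst p m) (j+1) - N * Dl (Lst p N) (j+1) := by
  intro N
  induction N with
  | zero => simp [Dl_eq_one (L := Lst p 0) (j := j+1) (by simp)]
  | succ N ih =>
    by_cases h : j + 1 ≤ N + 1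
    · rw [Finset.sum_Icc_succ_top h, ih, fGP_diff, Finset.sum_range_succ]
      push_cast
      ring
    · have hN : N + 1 < j + 1 := by omega
      have hIcc : Finset.Icc (j+1) (N+1) = ∅ := by
        rw [Finset.Icc_eq_empty]; omega
      rw [hIcc]
      have hall : ∀ m ∈ Finset.range (N+1), Dl (Lst p m) (j+1) = 1 := by
        intro m hm
        rw [Finset.mem_range] at hm
        exact Dl_eq_one (by simp; omega)
      rw [Finset.sum_congr rfl hall, Dl_eq_one (by simp; omega)]
      simp
lemma Lst_perm (q : ℕ → ℝ) : ∀ m, (Lst q m).Perm ((List.range' 1 m).map q)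
  | 0 => by simp [Lst]
  | m + 1 => by
    have h1 : List.range' 1 (m+1) = List.range' 1 m ++ [m+1] := by
      have := List.range'_concat (step := 1) (s := 1) (n := m)
      simpa [Nat.add_comm] using this
    rw [h1, List.map_append]
    show (q (m+1) :: Lst q m).Perm _
    refine List.Perm.trans (List.Perm.cons _ (Lst_perm q m)) ?_
    exact (List.perm_append_singleton _ _).symm

lemma sorted_get_ge (L : List ℕ) (hs : List.Pairwise (· < ·) L) :
    ∀ (c : ℕ), (∀ x ∈ L, c ≤ x) → ∀ i (h : i < L.length), c + i ≤ L.get ⟨i, h⟩ := by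
  induction L with
  | nil => intro c _ i h; simp at h
  | cons a L ih =>
    intro c hc i h
    cases i with
    | zero => simpa using hc a (by simp)
    | succ i =>
      have hL : List.Pairwise (· < ·) L := hs.of_cons
      have hc' : ∀ x ∈ L, c + 1 ≤ x := by
        intro x hx
        have h1 : a < x := (List.pairwise_cons.1 hs).1 x hx
        have h2 : c ≤ a := hc a (by simp)
        omega
      have := ih hL (c+1) hc' i (by simpa using Nat.lt_of_succ_lt_succ h)
      have hg : (a :: L).get ⟨i+1, h⟩ = L.get ⟨i, by simpa using Nat.lt_of_succ_lt_succ h⟩ := rfl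
      omega

/-- Key rearrangement bound. -/
lemma Dl_rearrange (ν : ℕ → ℝ) (hmono : Monotone ν) (h01 : ∀ l, 0 ≤ ν l ∧ ν l ≤ 1)
    (σ : ℕ → ℕ) (n m : ℕ) (hmn : m ≤ n)
    (hinj : Set.InjOn σ (Set.Icc 1 n)) (hmaps : ∀ l, l ∈ Set.Icc 1 n → 1 ≤ σ l)
    (j : ℕ) :
    Dl (Lst (fun l => ν (σ l)) m) j ≤ Dl (Lst ν m) j := by
  set Lσ : List ℕ := (List.range' 1 m).map σ with hLσ
  have hmemrange : ∀ x ∈ List.range' 1 m, x ∈ Set.Icc 1 n := by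
    intro x hx
    rw [List.mem_range'_1] at hx
    exact ⟨hx.1, by omega⟩
  have hnd : Lσ.Nodup := by
    refine List.Nodup.map_on ?_ (List.nodup_range' (s := 1) (n := m))
    intro x hx y hy hxy
    exact hinj (hmemrange x hx) (hmemrange y hy) hxy
  set Ls : List ℕ := Multiset.sort (↑Lσ) (· ≤ ·) with hLs
  have hperm : Ls.Perm Lσ := by
    rw [← Multiset.coe_eq_coe, Multiset.sort_eq]
  have hsorted : List.Pairwise (· < ·) Ls :=
    ((Multiset.pairwise_sort _ (· ≤ ·)).and (hperm.nodup_iff.2 hnd)).imp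
      (fun h => lt_of_le_of_ne h.1 h.2)
  have hlenσ : Lσ.length = m := by simp [hLσ]
  have hlen : Ls.length = m := hperm.length_eq.trans hlenσ
  have hge1 : ∀ x ∈ Ls, 1 ≤ x := by
    intro x hx
    have hx' : x ∈ Lσ := hperm.mem_iff.1 hx
    obtain ⟨y, hy, rfl⟩ := List.mem_map.1 hx'
    exact hmaps y (hmemrange y hy)
  have hget : ∀ i (h : i < Ls.length), 1 + i ≤ Ls.get ⟨i, h⟩ :=
    sorted_get_ge Ls hsorted 1 hge1
  -- Forall₂ between map ν Ls and map ν (range' 1 m)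
  have hfa : List.Forall₂ (fun a b => 0 ≤ b ∧ b ≤ a ∧ a ≤ 1)
      (Ls.map ν) ((List.range' 1 m).map ν) := by
    rw [List.forall₂_iff_get]
    constructor
    · simp [hlen]
    · intro i h1 h2
      have hi : i < Ls.length := by simpa using h1
      have hi' : i < (List.range' 1 m).length := by simpa using h2
      simp only [List.get_eq_getElem, List.getElem_map]
      have hr : (List.range' 1 m).get ⟨i, hi'⟩ = 1 + i := by
        simp [List.getElem_range']
      rw [List.get_eq_getElem] at hr; rw [hr]
      refine ⟨(h01 _).1, ?_, (h01 _).2⟩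
      exact hmono (hget i hi)
  -- chain of (in)equalities
  have e1 : Dl (Lst (fun l => ν (σ l)) m) j = Dl (Ls.map ν) j := by
    refine Dl_perm ?_ j
    refine (Lst_perm _ m).trans ?_
    have : (List.range' 1 m).map (fun l => ν (σ l)) = Lσ.map ν := by
      rw [hLσ, List.map_map]; rfl
    rw [this]
    exact (hperm.map ν).symm
  have e2 : Dl ((List.range' 1 m).map ν) j = Dl (Lst ν m) j :=
    (Dl_perm (Lst_perm ν m) j).symm
  rw [e1, ← e2]
  exact Dl_le_of_forall₂ hfa j
lemma mgf (c : ℝ) : ∀ (L : List ℝ) (K : ℕ), L.length ≤ K →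
    ∑ k ∈ Finset.range (K+1), c^k * V L k = (L.map (fun a => 1 - a + a*c)).prod := by
  intro L
  induction L with
  | nil =>
    intro K _
    rw [Finset.sum_eq_single 0]
    · simp [V]
    · intro k _ hk
      obtain ⟨k', rfl⟩ : ∃ k'', k = k'' + 1 := ⟨k - 1, by omega⟩
      simp [V]
    · simp
  | cons a L ih =>
    intro K hK
    obtain ⟨K', rfl⟩ : ∃ K'', K = K'' + 1 := ⟨K - 1, by simp at hK; omega⟩
    have hLK : L.length ≤ K' := by simp at hK; omega
    set P : ℝ := (L.map (fun a => 1 - a + a*c)).prod with hP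
    have hP1 : ∑ k ∈ Finset.range (K'+1), c^k * V L k = P := ih K' hLK
    have hP2 : ∑ k ∈ Finset.range (K'+1+1), c^k * V L k = P := by
      rw [Finset.sum_range_succ, V_eq_zero (by omega : L.length < K'+1), hP1]
      ring
    have step : ∀ k, c^(k+1) * V (a :: L) (k+1)
        = (1-a) * (c^(k+1) * V L (k+1)) + (a*c) * (c^k * V L k) := by
      intro k; rw [V]; ring
    calc ∑ k ∈ Finset.range (K'+1+1), c^k * V (a :: L) k
        = (∑ k ∈ Finset.range (K'+1), c^(k+1) * V (a :: L) (k+1)) + c^0 * V (a :: L) 0 := by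
          rw [Finset.sum_range_succ']
      _ = ((1-a) * ∑ k ∈ Finset.range (K'+1), c^(k+1) * V L (k+1))
          + ((a*c) * ∑ k ∈ Finset.range (K'+1), c^k * V L k) + (1-a) * V L 0 := by
          rw [Finset.sum_congr rfl (fun k _ => step k), Finset.sum_add_distrib,
            ← Finset.mul_sum, ← Finset.mul_sum]
          rw [show V (a :: L) 0 = (1-a) * V L 0 from rfl]
          ring
      _ = (1-a) * ((∑ k ∈ Finset.range (K'+1), c^(k+1) * V L (k+1)) + c^0 * V L 0)
          + (a*c) * P := by rw [hP1]; ring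
      _ = (1-a) * P + (a*c) * P := by
          rw [← Finset.sum_range_succ' (fun k => c^k * V L k) (K'+1), hP2]
      _ = _ := by rw [List.map_cons, List.prod_cons]; ring

lemma prod_bound (c : ℝ) (hc : 0 ≤ c) : ∀ (L : List ℝ), Mem01 L →
    (L.map (fun a => 1 - a + a*c)).prod ≤ Real.exp ((c-1) * L.sum) := by
  intro L
  induction L with
  | nil => intro _; simp
  | cons a L ih =>
    intro h
    have ha := h a (by simp)
    have hL : Mem01 L := fun b hb => h b (List.mem_cons_of_mem _ hb)
    rw [List.map_cons, List.prod_cons, List.sum_cons]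
    have h1 : 1 - a + a*c ≤ Real.exp ((c-1)*a) := by
      have := Real.add_one_le_exp ((c-1)*a)
      nlinarith
    have h2 : (0:ℝ) ≤ 1 - a + a*c := by nlinarith [ha.1, ha.2]
    have h3 : (0:ℝ) ≤ (L.map (fun a => 1 - a + a*c)).prod := by
      apply List.prod_nonneg
      intro x hx
      obtain ⟨b, hb, rfl⟩ := List.mem_map.1 hx
      have := hL b hb
      nlinarith [this.1, this.2]
    calc (1 - a + a*c) * (L.map (fun a => 1 - a + a*c)).prod
        ≤ Real.exp ((c-1)*a) * Real.exp ((c-1) * L.sum) := by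
          exact mul_le_mul h1 (ih hL) h3 (Real.exp_nonneg _)
      _ = Real.exp ((c-1) * (a + L.sum)) := by rw [← Real.exp_add]; ring_nf
lemma log_le_half_sub_inv {t : ℝ} (ht : 1 ≤ t) : Real.log t ≤ (t - t⁻¹) / 2 := by
  set f : ℝ → ℝ := fun x => (x - x⁻¹) / 2 - Real.log x with hf
  have hmono : MonotoneOn f (Set.Ici 1) := by
    have hcont : ContinuousOn f (Set.Ici 1) := by
      apply ContinuousOn.sub
      · apply ContinuousOn.div_const
        apply ContinuousOn.sub continuousOn_id
        apply ContinuousOn.inv₀ continuousOn_id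
        intro x hx
        have : (1:ℝ) ≤ x := hx
        intro h; simp only [id] at h; rw [h] at this; linarith
      · apply Real.continuousOn_log.mono
        intro x hx
        have : (1:ℝ) ≤ x := hx
        simp; linarith
    have hderiv : ∀ x ∈ interior (Set.Ici (1:ℝ)), HasDerivAt f ((1 + (x^2)⁻¹)/2 - x⁻¹) x := by
      intro x hx
      rw [interior_Ici] at hx
      have hx1 : (1:ℝ) < x := hx
      have hx0 : x ≠ 0 := by linarith
      have h1 : HasDerivAt (fun x : ℝ => x - x⁻¹) (1 - -(x^2)⁻¹) x :=
        (hasDerivAt_id x).sub (hasDerivAt_inv hx0)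
      have h2 := (h1.div_const 2).sub (Real.hasDerivAt_log hx0)
      rw [show (1 + (x^2)⁻¹)/2 - x⁻¹ = (1 - -(x^2)⁻¹)/2 - x⁻¹ by ring]
      exact h2
    apply monotoneOn_of_deriv_nonneg (convex_Ici 1) hcont
    · intro x hx
      exact (hderiv x hx).differentiableAt.differentiableWithinAt
    · intro x hx
      rw [(hderiv x hx).deriv]
      rw [interior_Ici] at hx
      have hx1 : (1:ℝ) < x := hx
      have hx0 : (0:ℝ) < x := by linarith
      have hy : (0:ℝ) < x⁻¹ := inv_pos.2 hx0
      have hxy : x * x⁻¹ = 1 := mul_inv_cancel₀ (ne_of_gt hx0)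
      have h2 : (x^2)⁻¹ = x⁻¹ * x⁻¹ := by rw [sq, mul_inv]
      nlinarith [sq_nonneg (1 - x⁻¹)]
  have h01 : f 1 ≤ f t := hmono (Set.mem_Ici.2 le_rfl) (Set.mem_Ici.2 ht) ht
  have hf1 : f 1 = 0 := by simp [hf]
  rw [hf1] at h01
  simp only [hf] at h01
  linarith

lemma chernoff (L : List ℝ) (h01 : Mem01 L) (u j : ℕ) (hj : 1 ≤ j) (hlen : L.length = u)
    (hμ : (j : ℝ) < L.sum) :
    Dl L j ≤ Real.exp (-(L.sum - j)^2 / (2*u)) := by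
  set μ : ℝ := L.sum with hμdef
  have hjpos : (0:ℝ) < j := by exact_mod_cast hj
  have hμpos : (0:ℝ) < μ := lt_trans hjpos hμ
  have hμu : μ ≤ u := by
    have := List.sum_le_card_nsmul L 1 (fun x hx => (h01 x hx).2)
    simpa [hlen] using this
  have hju : j < u := by
    have : (j:ℝ) < u := lt_of_lt_of_le hμ hμu
    exact_mod_cast this
  have hupos : (0:ℝ) < u := lt_trans hjpos (by exact_mod_cast hju)
  set c : ℝ := j / μ with hc
  have hcpos : 0 < c := div_pos hjpos hμpos
  have hc1 : c < 1 := (div_lt_one hμpos).2 hμ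
  -- step 1
  have h1 : Dl L j * c^j ≤ ∑ k ∈ Finset.range (u+1), c^k * V L k := by
    rw [Dl, Finset.sum_mul]
    refine le_trans (Finset.sum_le_sum ?_) (Finset.sum_le_sum_of_subset_of_nonneg ?_ ?_)
    · intro k hk
      rw [Finset.mem_range] at hk
      rw [mul_comm]
      exact mul_le_mul_of_nonneg_right
        (pow_le_pow_of_le_one hcpos.le hc1.le hk.le) (V_nonneg h01 k)
    · exact Finset.range_subset_range.2 (by omega)
    · intro k _ _
      exact mul_nonneg (pow_nonneg hcpos.le k) (V_nonneg h01 k)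
  have h2 : ∑ k ∈ Finset.range (u+1), c^k * V L k ≤ Real.exp ((c-1) * μ) := by
    rw [mgf c L u (le_of_eq hlen)]
    exact prod_bound c hcpos.le L h01
  have hcj : (0:ℝ) < c^j := pow_pos hcpos j
  have h3 : Dl L j ≤ Real.exp ((c-1) * μ) / c^j := by
    rw [le_div_iff₀ hcj]
    exact le_trans h1 h2
  have h4 : Real.exp ((c-1) * μ) / c^j = Real.exp ((c-1) * μ - j * Real.log c) := by
    rw [Real.exp_sub]
    congr 1
    rw [← Real.log_pow, Real.exp_log hcj]
  rw [h4] at h3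
  refine h3.trans (Real.exp_le_exp.2 ?_)
  -- exponent inequality
  set t : ℝ := μ / j with htdef
  have ht1 : 1 ≤ t := le_of_lt ((one_lt_div hjpos).2 hμ)
  have hlog := log_le_half_sub_inv ht1
  have hct : c = t⁻¹ := by rw [hc, htdef, inv_div]
  have hlogc : Real.log c = - Real.log t := by rw [hct, Real.log_inv]
  have hjt : (j:ℝ) * t = μ := by rw [htdef]; field_simp
  have hjti : (j:ℝ) * t⁻¹ = j^2 / μ := by
    rw [htdef, inv_div, mul_div_assoc', sq]
  have hcm : (c - 1) * μ = j - μ := by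
    rw [hc]; field_simp
  rw [hcm, hlogc]
  have step1 : (j:ℝ) - μ - j * -Real.log t ≤ j - μ + j * ((t - t⁻¹)/2) := by
    have := mul_le_mul_of_nonneg_left hlog hjpos.le
    linarith
  refine step1.trans ?_
  have expand : (j:ℝ) * ((t - t⁻¹)/2) = (μ - j^2/μ)/2 := by
    rw [← mul_div_assoc, mul_sub, hjt, hjti]
  have step2 : (j:ℝ) - μ + j * ((t - t⁻¹)/2) = -(μ - j)^2 / (2*μ) := by
    rw [expand]
    field_simp
    ring
  rw [step2]
  have step3 : (μ - j)^2 / (2*u) ≤ (μ - j)^2 / (2*μ) := by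
    gcongr <;> first | exact sq_nonneg _ | positivity | linarith
  rw [neg_div, neg_div]
  linarith
lemma Lst_mem01 {q : ℕ → ℝ} {m : ℕ} (h : ∀ l, 1 ≤ l → l ≤ m → 0 ≤ q l ∧ q l ≤ 1) :
    Mem01 (Lst q m) := by
  induction m with
  | zero => intro a ha; simp [Lst] at ha
  | succ m ih =>
    intro a ha
    rcases List.mem_cons.1 ha with rfl | ha'
    · exact h (m+1) (by omega) le_rfl
    · exact ih (fun l h1 h2 => h l h1 (by omega)) a ha'

lemma head_bound (ν : ℕ → ℝ) (hmono : Monotone ν) (h01 : ∀ l, 0 < ν l ∧ ν l ≤ 1)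
    (u : ℕ) (hu : 1 ≤ u) (j : ℕ) :
    ∑ m ∈ Finset.range u, Dl (Lst ν m) j ≤ (j : ℝ) / ν 1 * (ν u / ν 1) ^ j := by
  have hν1 : 0 < ν 1 := (h01 1).1
  have hmem : ∀ m, Mem01 (Lst ν m) :=
    fun m => Lst_mem01 (fun l _ _ => ⟨(h01 l).1.le, (h01 l).2⟩)
  set A : ℕ → ℝ := fun k => ∑ m ∈ Finset.range u, V (Lst ν m) k with hA
  have hAnn : ∀ k, 0 ≤ A k :=
    fun k => Finset.sum_nonneg fun m _ => V_nonneg (hmem m) k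
  -- key recursions
  have hrec : ∀ k, ν 1 * A k ≤ (if k = 0 then (1:ℝ) else 0)
      + (if k = 0 then 0 else ν u * A (k-1)) := by
    intro k
    have hterm : ∀ m ∈ Finset.range u, ν 1 * V (Lst ν m) k
        ≤ (V (Lst ν m) k - V (Lst ν (m+1)) k)
          + (if k = 0 then 0 else ν (m+1) * V (Lst ν m) (k-1)) := by
      intro m hm
      have h1 : ν 1 ≤ ν (m+1) := hmono (by omega)
      have hVnn := V_nonneg (hmem m) k
      have hLst : Lst ν (m+1) = ν (m+1) :: Lst ν m := rfl
      cases k with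
      | zero =>
        have : V (Lst ν (m+1)) 0 = (1 - ν (m+1)) * V (Lst ν m) 0 := by rw [hLst, V]
        norm_num
        nlinarith
      | succ k =>
        simp only [if_neg (Nat.succ_ne_zero k)]
        have : V (Lst ν (m+1)) (k+1)
            = (1 - ν (m+1)) * V (Lst ν m) (k+1) + ν (m+1) * V (Lst ν m) k := by rw [hLst, V]
        have hk1 : (k+1) - 1 = k := rfl
        rw [hk1]
        nlinarith
    have hsum := Finset.sum_le_sum hterm
    rw [← Finset.mul_sum] at hsum
    refine le_trans hsum ?_
    rw [Finset.sum_add_distrib]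
    have htel : ∑ m ∈ Finset.range u, (V (Lst ν m) k - V (Lst ν (m+1)) k)
        = V (Lst ν 0) k - V (Lst ν u) k := Finset.sum_range_sub' (fun m => V (Lst ν m) k) u
    rw [htel]
    have hb1 : V (Lst ν 0) k - V (Lst ν u) k ≤ (if k = 0 then (1:ℝ) else 0) := by
      have : V (Lst ν 0) k = (if k = 0 then (1:ℝ) else 0) := by
        cases k <;> simp [Lst, V]
      rw [this]
      have := V_nonneg (hmem u) k
      linarith
    have hb2 : ∑ m ∈ Finset.range u, (if k = 0 then (0:ℝ) else ν (m+1) * V (Lst ν m) (k-1))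
        ≤ (if k = 0 then 0 else ν u * A (k-1)) := by
      cases k with
      | zero => simp
      | succ k =>
        simp only [if_neg (Nat.succ_ne_zero k)]
        rw [hA, Finset.mul_sum]
        refine Finset.sum_le_sum fun m hm => ?_
        rw [Finset.mem_range] at hm
        have h1 : ν (m+1) ≤ ν u := hmono (by omega)
        have h2 := V_nonneg (hmem m) ((k+1)-1)
        nlinarith
    linarith
  -- solve recursion: A k ≤ (ν u / ν 1)^k / ν 1
  have hratio : ∀ k, A k ≤ (ν u / ν 1)^k / ν 1 := by
    intro k
    induction k with
    | zero =>
      have := hrec 0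
      norm_num at this
      rw [pow_zero]
      rw [le_div_iff₀ hν1]
      linarith
    | succ k ih =>
      have := hrec (k+1)
      simp only [if_neg (Nat.succ_ne_zero k)] at this
      have hk1 : (k+1) - 1 = k := rfl
      rw [hk1] at this
      have hνu : 0 ≤ ν u := (h01 u).1.le
      have step : ν u * A k ≤ ν u * ((ν u / ν 1)^k / ν 1) :=
        mul_le_mul_of_nonneg_left ih hνu
      rw [le_div_iff₀ hν1]
      calc A (k+1) * ν 1 = ν 1 * A (k+1) := by ring
        _ ≤ ν u * ((ν u / ν 1)^k / ν 1) := by linarith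
        _ = (ν u / ν 1)^(k+1) := by rw [pow_succ]; ring
  -- sum over k < j
  have hswap : ∑ m ∈ Finset.range u, Dl (Lst ν m) j = ∑ k ∈ Finset.range j, A k := by
    rw [hA]
    exact Finset.sum_comm
  rw [hswap]
  have hr1 : (1:ℝ) ≤ ν u / ν 1 := by
    rw [le_div_iff₀ hν1, one_mul]
    exact hmono hu
  have hbound : ∀ k ∈ Finset.range j, A k ≤ (ν u / ν 1)^j / ν 1 := by
    intro k hk
    rw [Finset.mem_range] at hk
    refine (hratio k).trans ?_
    have hp := pow_le_pow_right₀ hr1 hk.le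
    gcongr
  calc ∑ k ∈ Finset.range j, A k ≤ ∑ k ∈ Finset.range j, (ν u / ν 1)^j / ν 1 :=
        Finset.sum_le_sum hbound
    _ = (j:ℝ) * ((ν u / ν 1)^j / ν 1) := by
        rw [Finset.sum_const, Finset.card_range, nsmul_eq_mul]
    _ = (j:ℝ) / ν 1 * (ν u / ν 1)^j := by ring

lemma Lst_congr (q q' : ℕ → ℝ) : ∀ m, (∀ l, 1 ≤ l → l ≤ m → q l = q' l) → Lst q m = Lst q' m
  | 0, _ => rfl
  | m + 1, h => by
    show q (m+1) :: Lst q m = q' (m+1) :: Lst q' m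
    rw [h (m+1) (by omega) le_rfl, Lst_congr q q' m (fun l h1 h2 => h l h1 (by omega))]

lemma Lst_sum (q : ℕ → ℝ) : ∀ m, (Lst q m).sum = ∑ l ∈ Finset.Icc 1 m, q l
  | 0 => by simp [Lst]
  | m + 1 => by
    show q (m+1) + (Lst q m).sum = _
    rw [Lst_sum q m, Finset.sum_Icc_succ_top (by omega : 1 ≤ m + 1) q]
    ring

lemma Dl_Lst_anti (q : ℕ → ℝ) (hq : ∀ l, 0 ≤ q l ∧ q l ≤ 1) (j : ℕ) :
    ∀ {m m'}, m ≤ m' → Dl (Lst q m') j ≤ Dl (Lst q m) j := by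
  intro m m' hmm
  induction m' , hmm using Nat.le_induction with
  | base => exact le_refl _
  | succ m' hmm ih =>
    refine le_trans ?_ ih
    exact Dl_cons_le (hq (m'+1)).1 (hq (m'+1)).2
      (Lst_mem01 (fun l _ _ => hq l)) j

end FGPaux

/-- if `p` is a rearrangement of the nondecreasing sequence
`ν_1 ≤ … ≤ ν_n` in `(0,1]` (extended by `ν` beyond `n`), and `j ≤ u ≤ n` with
`∑_{l=1}^u ν_l > j`, then
`∑_{i=j}^n i f_GP(i;j,p) ≤ (j/ν_1)(ν_u/ν_1)^j + n exp(−(∑_{l=1}^u ν_l − j)²/(2u))`. -/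
theorem fGP_truncated_expectation_bound
    (ν : ℕ → ℝ) (hνmono : Monotone ν) (hν01 : ∀ l, ν l ∈ Set.Ioc (0 : ℝ) 1)
    (n u j : ℕ) (hj : 1 ≤ j) (hju : j ≤ u) (hun : u ≤ n)
    (hsum : (j : ℝ) < ∑ l ∈ Finset.Icc 1 u, ν l)
    (σ : ℕ → ℕ) (hσ : Set.BijOn σ (Set.Icc 1 n) (Set.Icc 1 n))
    (p : ℕ → ℝ)
    (hp1 : ∀ l, 1 ≤ l → l ≤ n → p l = ν (σ l))
    (hp2 : ∀ l, n < l → p l = ν l) :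
    ∑ i ∈ Finset.Icc j n, (i : ℝ) * fGP p j i
      ≤ (j / ν 1) * (ν u / ν 1) ^ j
        + n * Real.exp (-((∑ l ∈ Finset.Icc 1 u, ν l) - j) ^ 2 / (2 * u)) := by
  obtain ⟨j', rfl⟩ : ∃ j'', j = j'' + 1 := ⟨j - 1, by omega⟩
  set E : ℝ := Real.exp (-((∑ l ∈ Finset.Icc 1 u, ν l) - ((j'+1 : ℕ) : ℝ)) ^ 2 / (2 * u)) with hE
  have hν01' : ∀ l, 0 < ν l ∧ ν l ≤ 1 := fun l => ⟨(hν01 l).1, (hν01 l).2⟩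
  have hν01'' : ∀ l, 0 ≤ ν l ∧ ν l ≤ 1 := fun l => ⟨(hν01 l).1.le, (hν01 l).2⟩
  have hp01 : ∀ l, 1 ≤ l → l ≤ n → 0 ≤ p l ∧ p l ≤ 1 := by
    intro l h1 h2
    rw [hp1 l h1 h2]
    exact ⟨(hν01 _).1.le, (hν01 _).2⟩
  have hmemp : ∀ m, m ≤ n → FGPaux.Mem01 (FGPaux.Lst p m) := by
    intro m hm
    exact FGPaux.Lst_mem01 (fun l hl1 hl2 => hp01 l hl1 (le_trans hl2 hm))
  have h1 := FGPaux.sum_ident p j' n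
  have h2 : ∑ i ∈ Finset.Icc (j'+1) n, (i : ℝ) * fGP p (j'+1) i
      ≤ ∑ m ∈ Finset.range n, FGPaux.Dl (FGPaux.Lst p m) (j'+1) := by
    rw [h1]
    have hd := FGPaux.Dl_nonneg (hmemp n le_rfl) (j'+1)
    have hn0 : (0:ℝ) ≤ (n:ℝ) := Nat.cast_nonneg n
    nlinarith
  have h3 : ∀ m ∈ Finset.range n, FGPaux.Dl (FGPaux.Lst p m) (j'+1)
      ≤ FGPaux.Dl (FGPaux.Lst ν m) (j'+1) := by
    intro m hm
    rw [Finset.mem_range] at hm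
    have hcong : FGPaux.Lst p m = FGPaux.Lst (fun l => ν (σ l)) m :=
      FGPaux.Lst_congr _ _ m (fun l hl1 hl2 => hp1 l hl1 (by omega))
    rw [hcong]
    exact FGPaux.Dl_rearrange ν hνmono hν01'' σ n m (le_of_lt hm)
      hσ.injOn (fun l hl => (hσ.mapsTo hl).1) (j'+1)
  have hsplit : ∑ m ∈ Finset.range n, FGPaux.Dl (FGPaux.Lst ν m) (j'+1)
      = (∑ m ∈ Finset.range u, FGPaux.Dl (FGPaux.Lst ν m) (j'+1))
        + ∑ m ∈ Finset.Ico u n, FGPaux.Dl (FGPaux.Lst ν m) (j'+1) := by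
    rw [Finset.range_eq_Ico, Finset.range_eq_Ico]
    exact (Finset.sum_Ico_consecutive (fun m => FGPaux.Dl (FGPaux.Lst ν m) (j'+1)) (Nat.zero_le u) hun).symm
  have hu1 : 1 ≤ u := le_trans hj hju
  have hhead := FGPaux.head_bound ν hνmono hν01' u hu1 (j'+1)
  have hchern : FGPaux.Dl (FGPaux.Lst ν u) (j'+1) ≤ E := by
    have hLsum : (FGPaux.Lst ν u).sum = ∑ l ∈ Finset.Icc 1 u, ν l := FGPaux.Lst_sum ν u
    have hc := FGPaux.chernoff (FGPaux.Lst ν u)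
      (FGPaux.Lst_mem01 (fun l _ _ => hν01'' l)) u (j'+1) (by omega)
      (FGPaux.Lst_length ν u) (by rw [hLsum]; exact_mod_cast hsum)
    rw [hLsum] at hc
    exact hc
  have htail : ∑ m ∈ Finset.Ico u n, FGPaux.Dl (FGPaux.Lst ν m) (j'+1) ≤ (n : ℝ) * E := by
    have hterm : ∀ m ∈ Finset.Ico u n, FGPaux.Dl (FGPaux.Lst ν m) (j'+1) ≤ E := by
      intro m hm
      rw [Finset.mem_Ico] at hm
      exact le_trans (FGPaux.Dl_Lst_anti ν hν01'' (j'+1) hm.1) hchern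
    calc ∑ m ∈ Finset.Ico u n, FGPaux.Dl (FGPaux.Lst ν m) (j'+1)
        ≤ ∑ _m ∈ Finset.Ico u n, E := Finset.sum_le_sum hterm
      _ = ((n - u : ℕ) : ℝ) * E := by rw [Finset.sum_const, Nat.card_Ico, nsmul_eq_mul]
      _ ≤ (n : ℝ) * E := by
          have hle : ((n - u : ℕ) : ℝ) ≤ (n : ℝ) := by exact_mod_cast Nat.sub_le n u
          have hEpos : 0 ≤ E := (Real.exp_pos _).le
          nlinarith
  calc ∑ i ∈ Finset.Icc (j'+1) n, (i : ℝ) * fGP p (j'+1) i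
      ≤ ∑ m ∈ Finset.range n, FGPaux.Dl (FGPaux.Lst p m) (j'+1) := h2
    _ ≤ ∑ m ∈ Finset.range n, FGPaux.Dl (FGPaux.Lst ν m) (j'+1) := Finset.sum_le_sum h3
    _ = _ := hsplit
    _ ≤ ((j'+1 : ℕ) : ℝ) / ν 1 * (ν u / ν 1) ^ (j'+1) + (n : ℝ) * E := add_le_add hhead htail
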